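/- If a subset I ⊆ [K] satisfies rank([F_I; G_I]) = rank(F_I) + N but the columns of [F_I; G_I] are linearly dependent (i.e., |I| > rank([F_I; G_I])), then there exists a nonempty subset J ⊆ I such that the set I \ J also satisfies the rank-increment condition rank([F_{I\J}; G_{I\J}]) = rank(F_{I\J}) + N. -/

import Mathlib

/-- The submatrix of `A` formed by the columns indexed by the subset `I`. -/
def colSub {𝔽 : Type*} {M K : ℕ} (A : Matrix (Fin M) (Fin K) 𝔽) (I : Finset (Fin K)) :
    Matrix (Fin M) {x // x ∈ I} 𝔽 :=
  A.submatrix id Subtype.val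

open Submodule Module Matrix

lemma colSub_rank_eq {𝔽 : Type*} [Field 𝔽] {M K : ℕ}
    (A : Matrix (Fin M) (Fin K) 𝔽) (I : Finset (Fin K)) :
    (colSub A I).rank = finrank 𝔽 (span 𝔽 (Aᵀ '' ↑I)) := by
  rw [Matrix.rank_eq_finrank_span_cols]
  have hset : Set.range (colSub A I)ᵀ = Aᵀ '' ↑I := by
    exact (Set.image_eq_range (Aᵀ : Fin K → Fin M → 𝔽) ↑I).symm
  exact congrArg (fun s => finrank 𝔽 (span 𝔽 s)) hset

lemma stack_rank_eq {𝔽 : Type*} [Field 𝔽] {M N K : ℕ}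
    (F : Matrix (Fin M) (Fin K) 𝔽) (G : Matrix (Fin N) (Fin K) 𝔽) (I : Finset (Fin K)) :
    (Matrix.fromRows (colSub F I) (colSub G I)).rank
      = finrank 𝔽 (span 𝔽 ((fun j => Sum.elim (Fᵀ j) (Gᵀ j)) '' ↑I)) := by
  rw [Matrix.rank_eq_finrank_span_cols]
  have h1 : (Matrix.fromRows (colSub F I) (colSub G I))ᵀ
      = (fun j => Sum.elim (Fᵀ j) (Gᵀ j)) ∘ Subtype.val := by
    funext j i; cases i <;> rfl
  have hset : Set.range (Matrix.fromRows (colSub F I) (colSub G I))ᵀ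
      = (fun j => Sum.elim (Fᵀ j) (Gᵀ j)) '' ↑I := by
    rw [h1, Set.range_comp, Subtype.range_coe]
  exact congrArg (fun s => finrank 𝔽 (span 𝔽 s)) hset

/-- If `I` satisfies the rank-increment condition but the columns of
[F_I;G_I] are linearly dependent, then some nonempty `J ⊆ I` can be removed
while preserving the rank-increment condition. -/
theorem exists_removable_subset
    {𝔽 : Type*} [Field 𝔽] [Fintype 𝔽] {M N K : ℕ}
    (F : Matrix (Fin M) (Fin K) 𝔽) (G : Matrix (Fin N) (Fin K) 𝔽)
    (I : Finset (Fin K))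
    (hI : (Matrix.fromRows (colSub F I) (colSub G I)).rank = (colSub F I).rank + N)
    (hdep : (Matrix.fromRows (colSub F I) (colSub G I)).rank < I.card) :
    ∃ J : Finset (Fin K), J.Nonempty ∧ J ⊆ I ∧
      (Matrix.fromRows (colSub F (I \ J)) (colSub G (I \ J))).rank
        = (colSub F (I \ J)).rank + N := by
  set S : Fin K → (Fin M ⊕ Fin N → 𝔽) := fun j => Sum.elim (Fᵀ j) (Gᵀ j) with hS
  -- the family of stacked columns over I is not linearly independent
  have hnotLI : ¬ LinearIndependent 𝔽 (fun j : {x // x ∈ I} => S j.val) := by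
    intro h
    have hcard := finrank_span_eq_card (R := 𝔽) h
    have hr : Set.range (fun j : {x // x ∈ I} => S j.val) = S '' ↑I := by
      rw [show (fun j : {x // x ∈ I} => S j.val) = S ∘ Subtype.val from rfl,
        Set.range_comp, Subtype.range_coe]
    rw [hr, Fintype.card_coe] at hcard
    rw [stack_rank_eq, hcard] at hdep
    exact lt_irrefl _ hdep
  -- extract a column in the span of the others
  rw [linearIndependent_iff_notMem_span] at hnotLI
  push_neg at hnotLI
  obtain ⟨i, hi⟩ := hnotLI
  set c : Fin K := i.val with hc
  have hval : Subtype.val '' ((Set.univ : Set {x // x ∈ I}) \ {i})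
      = (↑I : Set (Fin K)) \ {c} := by
    ext x
    constructor
    · rintro ⟨y, ⟨-, hne⟩, rfl⟩
      exact ⟨y.2, fun h => hne (Subtype.ext h)⟩
    · rintro ⟨hx, hne⟩
      exact ⟨⟨x, hx⟩, ⟨trivial, fun h => hne (congrArg Subtype.val h)⟩, rfl⟩
  have himg : (fun j : {x // x ∈ I} => S j.val) '' (Set.univ \ {i})
      = S '' ↑(I.erase c) := by
    rw [show (fun j : {x // x ∈ I} => S j.val) = S ∘ Subtype.val from rfl,
      Set.image_comp, hval, Finset.coe_erase]
  rw [himg] at hi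
  -- spans over I and over I.erase c agree
  have hIinsert : (↑I : Set (Fin K)) = insert c ↑(I.erase c) := by
    rw [← Finset.coe_insert, Finset.insert_erase i.2]
  have hspanS : span 𝔽 (S '' ↑I) = span 𝔽 (S '' ↑(I.erase c)) := by
    rw [hIinsert, Set.image_insert_eq, Submodule.span_insert_eq_span hi]
  -- the F-column of c is in the span of the other F-columns
  have hFc : Fᵀ c ∈ span 𝔽 (Fᵀ '' ↑(I.erase c)) := by
    let L : (Fin M ⊕ Fin N → 𝔽) →ₗ[𝔽] (Fin M → 𝔽) := LinearMap.funLeft 𝔽 𝔽 Sum.inl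
    have hLS : ∀ j, L (S j) = Fᵀ j := fun j => rfl
    have := Submodule.mem_map_of_mem (f := L) hi
    rw [Submodule.map_span, ← Set.image_comp] at this
    have himg2 : (L ∘ S) '' ↑(I.erase c) = Fᵀ '' ↑(I.erase c) := by
      apply Set.image_congr; intro x _; exact hLS x
    rwa [himg2, hLS] at this
  have hspanF : span 𝔽 (Fᵀ '' ↑I) = span 𝔽 (Fᵀ '' ↑(I.erase c)) := by
    rw [hIinsert]
    exact (congrArg (span 𝔽) (Set.image_insert_eq (f := (Fᵀ : Fin K → Fin M → 𝔽)))).trans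
      (Submodule.span_insert_eq_span hFc)
  refine ⟨{c}, Finset.singleton_nonempty c, Finset.singleton_subset_iff.mpr i.2, ?_⟩
  have hsd : I \ {c} = I.erase c := Finset.sdiff_singleton_eq_erase c I
  rw [hsd, stack_rank_eq, colSub_rank_eq, ← hspanS, ← hspanF,
    ← stack_rank_eq, ← colSub_rank_eq, hI]
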